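/- Let n ≥ 1 and let U ⊆ ℂⁿ be a connected open set. Define the multiplication of holomorphic vector fields X, Y : U → ℂⁿ pointwise coordinatewise: (X ∘ Y)_k = X_k·Y_k for k = 1,…,n. Then a holomorphic map E : U → ℂⁿ satisfies the Euler field equation [E, X∘Y] − [E, X]∘Y − X∘[E, Y] = X∘Y for all holomorphic vector fields X, Y : U → ℂⁿ if and only if there exist c₁,…,cₙ ∈ ℂ such that E(u₁,…,uₙ) = (u₁ + c₁, …, uₙ + cₙ) for all u ∈ U. -/

import Mathlib

set_option maxHeartbeats 1000000

noncomputable section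

/-- The Lie bracket `[X, Y](p) = (DY)(p)(X(p)) − (DX)(p)(Y(p))` of (holomorphic) vector
fields on (an open subset of) `ℂⁿ`. -/
def lieBracket {n : ℕ} (X Y : (Fin n → ℂ) → (Fin n → ℂ)) : (Fin n → ℂ) → (Fin n → ℂ) :=
  fun p => fderiv ℂ Y p (X p) - fderiv ℂ X p (Y p)

/-- The coordinatewise multiplication of the semisimple F-manifold `A₁ⁿ` in canonical
coordinates: `(X ∘ Y)_k = X_k·Y_k`. -/
def mulSS {n : ℕ} (X Y : (Fin n → ℂ) → (Fin n → ℂ)) : (Fin n → ℂ) → (Fin n → ℂ) :=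
  fun p k => X p k * Y p k

open ContinuousLinearMap in
lemma mulSS_hasFDerivAt {n : ℕ} {X Y : (Fin n → ℂ) → (Fin n → ℂ)} {p : Fin n → ℂ}
    (hX : DifferentiableAt ℂ X p) (hY : DifferentiableAt ℂ Y p) :
    HasFDerivAt (mulSS X Y)
      (ContinuousLinearMap.pi fun k =>
        X p k • ((proj k).comp (fderiv ℂ Y p)) + Y p k • ((proj k).comp (fderiv ℂ X p))) p := by
  apply hasFDerivAt_pi.2
  intro k
  have hXk : HasFDerivAt (fun q => X q k) ((proj k).comp (fderiv ℂ X p)) p :=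
    hasFDerivAt_pi'.1 hX.hasFDerivAt k
  have hYk : HasFDerivAt (fun q => Y q k) ((proj k).comp (fderiv ℂ Y p)) p :=
    hasFDerivAt_pi'.1 hY.hasFDerivAt k
  exact hXk.mul hYk

lemma fderiv_mulSS {n : ℕ} {X Y : (Fin n → ℂ) → (Fin n → ℂ)} {p : Fin n → ℂ}
    (hX : DifferentiableAt ℂ X p) (hY : DifferentiableAt ℂ Y p) (v : Fin n → ℂ) (k : Fin n) :
    fderiv ℂ (mulSS X Y) p v k =
      X p k * fderiv ℂ Y p v k + Y p k * fderiv ℂ X p v k := by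
  rw [(mulSS_hasFDerivAt hX hY).fderiv]
  simp [smul_eq_mul]

/-- **Remark 2.7(i) of David–Hertling.** On a semisimple F-manifold in canonical
coordinates (coordinatewise multiplication on a connected open `U ⊆ ℂⁿ`), a holomorphic
vector field `E` satisfies the Euler field equation `Lie_E(∘) = ∘`, i.e.
`[E, X∘Y] − [E,X]∘Y − X∘[E,Y] = X∘Y` for all holomorphic vector fields `X, Y`, if and
only if `E = Σ_k (u_k + c_k) e_k` for some constants `c₁,…,cₙ ∈ ℂ`. -/
theorem euler_fields_on_semisimple (n : ℕ) (hn : 1 ≤ n)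
    (U : Set (Fin n → ℂ)) (hU : IsOpen U) (hUc : IsConnected U)
    (E : (Fin n → ℂ) → (Fin n → ℂ)) (hE : DifferentiableOn ℂ E U) :
    (∀ X Y : (Fin n → ℂ) → (Fin n → ℂ),
        DifferentiableOn ℂ X U → DifferentiableOn ℂ Y U →
        ∀ p ∈ U,
          lieBracket E (mulSS X Y) p - mulSS (lieBracket E X) Y p
            - mulSS X (lieBracket E Y) p = mulSS X Y p) ↔
      ∃ c : Fin n → ℂ, ∀ p ∈ U, E p = fun k => p k + c k := by
  constructor
  · intro h
    -- Step 1: the derivative of `E` is the identity at every point of `U`.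
    have key : ∀ p ∈ U, ∀ v, fderiv ℂ E p v = v := by
      intro p hp
      have hsingle : ∀ j : Fin n, fderiv ℂ E p (Pi.single j 1) = Pi.single j 1 := by
        intro j
        have hXjd : DifferentiableOn ℂ (fun _ : Fin n → ℂ => (Pi.single j 1 : Fin n → ℂ)) U :=
          (differentiable_const _).differentiableOn
        have hmul : mulSS (fun _ : Fin n → ℂ => (Pi.single j 1 : Fin n → ℂ))
            (fun _ => Pi.single j 1) = fun _ => Pi.single j 1 := by
          funext q k
          simp only [mulSS, Pi.single_apply]
          split <;> simp
        have heq := h _ _ hXjd hXjd p hp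
        rw [hmul] at heq
        have hDXj : fderiv ℂ (fun _ : Fin n → ℂ => (Pi.single j 1 : Fin n → ℂ)) p = 0 :=
          fderiv_const_apply _
        funext k
        have heqk := congrFun heq k
        simp only [lieBracket, mulSS, hDXj, ContinuousLinearMap.zero_apply,
          Pi.sub_apply, Pi.zero_apply, zero_sub, Pi.neg_apply] at heqk
        rcases eq_or_ne k j with rfl | hkj
        · rw [Pi.single_eq_same] at heqk ⊢
          linear_combination heqk
        · rw [Pi.single_eq_of_ne hkj] at heqk ⊢
          linear_combination -heqk
      intro v
      have hlin : ((fderiv ℂ E p : (Fin n → ℂ) →L[ℂ] (Fin n → ℂ)) :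
          (Fin n → ℂ) →ₗ[ℂ] (Fin n → ℂ)) = LinearMap.id := by
        apply (Pi.basisFun ℂ (Fin n)).ext
        intro j
        simpa using hsingle j
      have := LinearMap.congr_fun hlin v
      simpa using this
    -- Step 2: `F := E - id` has zero derivative on `U`.
    set F : (Fin n → ℂ) → (Fin n → ℂ) := fun q => E q - q with hF
    have hFderiv : ∀ p ∈ U, fderiv ℂ F p = 0 := by
      intro p hp
      have hEp : DifferentiableAt ℂ E p := hE.differentiableAt (hU.mem_nhds hp)
      have hid : DifferentiableAt ℂ (fun q : Fin n → ℂ => q) p := differentiableAt_fun_id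
      rw [hF, fderiv_fun_sub hEp hid]
      ext v
      simp [key p hp v, fderiv_id']
    -- Step 3: `F` is locally constant on `U`.
    have hlocal : ∀ p ∈ U, ∃ ε > 0, Metric.ball p ε ⊆ U ∧
        ∀ q ∈ Metric.ball p ε, F q = F p := by
      intro p hp
      obtain ⟨ε, hε, hball⟩ := Metric.isOpen_iff.1 hU p hp
      refine ⟨ε, hε, hball, fun q hq => ?_⟩
      have hFd : DifferentiableOn ℂ F (Metric.ball p ε) :=
        (hE.mono hball).sub differentiableOn_id
      refine (convex_ball p ε).is_const_of_fderivWithin_eq_zero hFd ?_ hq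
        (Metric.mem_ball_self hε)
      intro z hz
      rw [fderivWithin_of_isOpen Metric.isOpen_ball hz]
      exact hFderiv z (hball hz)
    -- Step 4: use connectedness to conclude that `F` is constant on `U`.
    obtain ⟨p₀, hp₀⟩ := hUc.nonempty
    have hshrink : ∀ (p q : Fin n → ℂ) (ε : ℝ), q ∈ Metric.ball p ε →
        Metric.ball q (ε - dist q p) ⊆ Metric.ball p ε := by
      intro p q ε hq r hr
      rw [Metric.mem_ball] at *
      calc dist r p ≤ dist r q + dist q p := dist_triangle r q p
        _ < (ε - dist q p) + dist q p := by linarith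
        _ = ε := by ring
    set A : Set (Fin n → ℂ) :=
      {p | ∃ ε > 0, Metric.ball p ε ⊆ U ∧ ∀ q ∈ Metric.ball p ε, F q = F p₀} with hA
    set B : Set (Fin n → ℂ) :=
      {p | ∃ ε > 0, Metric.ball p ε ⊆ U ∧ F p ≠ F p₀ ∧
        ∀ q ∈ Metric.ball p ε, F q = F p} with hB
    have hAopen : IsOpen A := by
      rw [Metric.isOpen_iff]
      rintro p ⟨ε, hε, hballU, hconst⟩
      refine ⟨ε, hε, ?_⟩
      intro q hq
      have hq' : dist q p < ε := Metric.mem_ball.1 hq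
      exact ⟨ε - dist q p, by linarith, (hshrink p q ε hq).trans hballU,
        fun r hr => hconst r (hshrink p q ε hq hr)⟩
    have hBopen : IsOpen B := by
      rw [Metric.isOpen_iff]
      rintro p ⟨ε, hε, hballU, hne, hconst⟩
      refine ⟨ε, hε, ?_⟩
      intro q hq
      have hq' : dist q p < ε := Metric.mem_ball.1 hq
      have hFq : F q = F p := hconst q hq
      exact ⟨ε - dist q p, by linarith, (hshrink p q ε hq).trans hballU,
        by rw [hFq]; exact hne,
        fun r hr => by rw [hconst r (hshrink p q ε hq hr), hFq]⟩
    have hcover : U ⊆ A ∪ B := by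
      intro p hp
      obtain ⟨ε, hε, hballU, hconst⟩ := hlocal p hp
      by_cases hFp : F p = F p₀
      · exact Or.inl ⟨ε, hε, hballU, fun q hq => by rw [hconst q hq, hFp]⟩
      · exact Or.inr ⟨ε, hε, hballU, hFp, hconst⟩
    have hdisj : ∀ x, x ∈ A → x ∈ B → False := by
      intro x hxA hxB
      obtain ⟨ε, hε, -, hconstA⟩ := hxA
      obtain ⟨ε', hε', -, hne, -⟩ := hxB
      exact hne (hconstA x (Metric.mem_ball_self hε))
    have hAne : (U ∩ A).Nonempty := by
      obtain ⟨ε, hε, hballU, hconst⟩ := hlocal p₀ hp₀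
      exact ⟨p₀, hp₀, ε, hε, hballU, hconst⟩
    have hBempty : ∀ p ∈ U, p ∉ B := by
      intro p hp hpB
      have hBne : (U ∩ B).Nonempty := ⟨p, hp, hpB⟩
      obtain ⟨x, hxU, hxA, hxB⟩ := hUc.isPreconnected A B hAopen hBopen hcover hAne hBne
      exact hdisj x hxA hxB
    have hconstU : ∀ p ∈ U, F p = F p₀ := by
      intro p hp
      rcases hcover hp with hpA | hpB
      · obtain ⟨ε, hε, -, hconst⟩ := hpA
        exact hconst p (Metric.mem_ball_self hε)
      · exact absurd hpB (hBempty p hp)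
    refine ⟨F p₀, fun p hp => ?_⟩
    have hcst : F p = F p₀ := hconstU p hp
    funext k
    have hk := congrFun hcst k
    simp only [hF, Pi.sub_apply] at hk ⊢
    linear_combination hk
  · rintro ⟨c, hc⟩
    intro X Y hX hY p hp
    have hXp : DifferentiableAt ℂ X p := hX.differentiableAt (hU.mem_nhds hp)
    have hYp : DifferentiableAt ℂ Y p := hY.differentiableAt (hU.mem_nhds hp)
    -- the derivative of `E` at `p` is the identity
    have hEd : ∀ v k, fderiv ℂ E p v k = v k := by
      have heq : E =ᶠ[nhds p] fun q => q + c := by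
        filter_upwards [hU.mem_nhds hp] with q hq
        funext k
        simp [hc q hq]
      have h1 : HasFDerivAt (fun q : Fin n → ℂ => q + c)
          (ContinuousLinearMap.id ℂ (Fin n → ℂ)) p :=
        (hasFDerivAt_id p).add_const c
      have h2 : HasFDerivAt E (ContinuousLinearMap.id ℂ (Fin n → ℂ)) p :=
        h1.congr_of_eventuallyEq heq
      intro v k
      rw [h2.fderiv]
      rfl
    have e0 : fderiv ℂ (mulSS X Y) p (E p) =
        fun k => X p k * fderiv ℂ Y p (E p) k + Y p k * fderiv ℂ X p (E p) k := by
      funext k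
      exact fderiv_mulSS hXp hYp (E p) k
    funext k
    simp only [lieBracket, mulSS, Pi.sub_apply, e0, hEd]
    ring
end
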